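/- Let (v₁, v₂) be an orthonormal basis of ℝ², let 0 < d₁ < d₂, and let p_{i,j} = i·d₁·v₁ + j·d₂·v₂. Let u be a unit vector in ℝ², s ≥ 1, and set c = ⟨u, v₁⟩, s₁ = √((s² − 1)·c² + 1) and s₂ = √((s² − 1)·(1 − c²) + 1). Then for all integers i, j: ‖S_{u,s}(p_{i+1,j}) − S_{u,s}(p_{i,j})‖₂ = s₁·d₁ and ‖S_{u,s}(p_{i,j+1}) − S_{u,s}(p_{i,j})‖₂ = s₂·d₂. Moreover, for any two grid points in different rows (j ≠ j′), ‖S_{u,s}(p_{i,j}) − S_{u,s}(p_{i′,j′})‖₂ ≥ d₂. -/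

import Mathlib

open scoped RealInnerProductSpace

/-- The directional scaling map `S_{u,α} = U⁻¹ ⬝ diag(α,1,…,1) ⬝ U` on Euclidean space,
for an orthogonal base-change matrix `U` (with `U u = e₁`) and scaling factor `α`. -/
noncomputable def scalingMap {n : ℕ} [NeZero n] (U : Matrix (Fin n) (Fin n) ℝ) (α : ℝ) :
    EuclideanSpace ℝ (Fin n) →ₗ[ℝ] EuclideanSpace ℝ (Fin n) :=
  Matrix.toEuclideanLin (U⁻¹ * Matrix.diagonal (fun i : Fin n => if i = 0 then α else 1) * U)

/-- The rotated grid point `p_{i,j} = i·d₁·v₁ + j·d₂·v₂` in `ℝ²`, indexed by integers. -/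
noncomputable def gridPointZ (v₁ v₂ : EuclideanSpace ℝ (Fin 2)) (d₁ d₂ : ℝ) (i j : ℤ) :
    EuclideanSpace ℝ (Fin 2) :=
  ((i : ℝ) * d₁) • v₁ + ((j : ℝ) * d₂) • v₂

/-- Columns of a real 2×2 matrix with orthonormal rows are orthonormal. -/
lemma cols_aux (p q r t : ℝ) (hp : p^2+q^2 = 1) (hr : r^2+t^2 = 1) (ho : p*r+q*t = 0) :
    p^2+r^2 = 1 ∧ q^2+t^2 = 1 ∧ p*q+r*t = 0 := by
  have h : (!![p,q;r,t]) * (!![p,r;q,t]) = 1 := by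
    ext i j
    fin_cases i <;> fin_cases j <;>
      simp [Matrix.mul_apply, Fin.sum_univ_two, Matrix.one_apply] <;> linarith
  have h2 := mul_eq_one_comm.mp h
  have e1 := congrFun (congrFun h2 0) 0
  have e2 := congrFun (congrFun h2 1) 1
  have e3 := congrFun (congrFun h2 0) 1
  simp [Matrix.mul_apply, Fin.sum_univ_two, Matrix.one_apply] at e1 e2 e3
  refine ⟨by nlinarith [e1], by nlinarith [e2], by nlinarith [e3]⟩

/-- Norm-squared formula for the scaling map. -/
lemma scalingMap_norm_sq (U : Matrix (Fin 2) (Fin 2) ℝ)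
    (hU : U ∈ Matrix.orthogonalGroup (Fin 2) ℝ)
    (u : EuclideanSpace ℝ (Fin 2)) (hUu : Matrix.toEuclideanLin U u = EuclideanSpace.single 0 1)
    (s : ℝ) (x : EuclideanSpace ℝ (Fin 2)) :
    ‖scalingMap U s x‖ ^ 2 = ‖x‖ ^ 2 + (s ^ 2 - 1) * ⟪u, x⟫ ^ 2 := by
  have hU1 : U * star U = 1 := Matrix.mem_orthogonalGroup_iff _ _ |>.1 hU
  have hU2 : star U * U = 1 := Matrix.mem_orthogonalGroup_iff' _ _ |>.1 hU
  have hinv : U⁻¹ = star U := Matrix.inv_eq_right_inv hU1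
  have hr1 := congrFun (congrFun hU1 0) 0
  have hr2 := congrFun (congrFun hU1 0) 1
  have hr3 := congrFun (congrFun hU1 1) 1
  have hc1 := congrFun (congrFun hU2 0) 0
  have hc2 := congrFun (congrFun hU2 0) 1
  have hc3 := congrFun (congrFun hU2 1) 1
  simp [Matrix.mul_apply, Fin.sum_univ_two, Matrix.one_apply, Matrix.star_eq_conjTranspose,
    Matrix.conjTranspose_apply] at hr1 hr2 hr3 hc1 hc2 hc3
  have e0 := congrArg (fun v => v 0) hUu
  have e1 := congrArg (fun v => v 1) hUu
  simp [Matrix.toEuclideanLin_apply, Matrix.mulVec, dotProduct, Fin.sum_univ_two,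
    EuclideanSpace.single_apply] at e0 e1
  have hu0 : u 0 = U 0 0 := by linear_combination U 0 0 * e0 + U 1 0 * e1 - u 0 * hc1 - u 1 * hc2
  have hu1 : u 1 = U 0 1 := by linear_combination U 0 1 * e0 + U 1 1 * e1 - u 0 * hc2 - u 1 * hc3
  have hn : ∀ y : EuclideanSpace ℝ (Fin 2), ‖y‖ ^ 2 = y 0 ^ 2 + y 1 ^ 2 := by
    intro y
    rw [EuclideanSpace.norm_sq_eq]
    simp [Fin.sum_univ_two]
  rw [hn, hn]
  have hi : ⟪u, x⟫ = u 0 * x 0 + u 1 * x 1 := by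
    simp [PiLp.inner_apply, Fin.sum_univ_two, mul_comm]
  rw [hi, hu0, hu1]
  have hs0 : ∀ i : Fin 2, scalingMap U s x i =
      (U⁻¹ * Matrix.diagonal (fun i : Fin 2 => if i = 0 then s else 1) * U) i 0 * x 0 +
      (U⁻¹ * Matrix.diagonal (fun i : Fin 2 => if i = 0 then s else 1) * U) i 1 * x 1 := by
    intro i
    simp [scalingMap, Matrix.toEuclideanLin_apply, Matrix.mulVec, dotProduct,
      Fin.sum_univ_two]
    fin_cases i <;> simp [Matrix.mul_apply, Fin.sum_univ_two] <;> ring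
  rw [hs0 0, hs0 1, hinv]
  simp [Matrix.mul_apply, Fin.sum_univ_two, Matrix.star_eq_conjTranspose,
    Matrix.conjTranspose_apply]
  linear_combination (s^2 * (U 0 0 * x 0 + U 0 1 * x 1)^2) * hr1 +
    (2 * s * (U 0 0 * x 0 + U 0 1 * x 1) * (U 1 0 * x 0 + U 1 1 * x 1)) * hr2 +
    ((U 1 0 * x 0 + U 1 1 * x 1)^2) * hr3 +
    (x 0 ^ 2) * hc1 + (2 * x 0 * x 1) * hc2 + (x 1 ^ 2) * hc3

/-- with `c = ⟨u, v₁⟩`, `s₁ = √((s²−1)c²+1)` and `s₂ = √((s²−1)(1−c²)+1)`, the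
scaled grid has horizontal neighbour distances `s₁·d₁`, vertical neighbour distances `s₂·d₂`,
and any two scaled grid points in different rows are at distance at least `d₂`. -/
theorem scaled_grid_distances (v₁ v₂ : EuclideanSpace ℝ (Fin 2))
    (hv₁ : ‖v₁‖ = 1) (hv₂ : ‖v₂‖ = 1) (hv₁₂ : ⟪v₁, v₂⟫ = 0)
    (d₁ d₂ : ℝ) (hd₁ : 0 < d₁) (hd₁₂ : d₁ < d₂)
    (u : EuclideanSpace ℝ (Fin 2)) (hu : ‖u‖ = 1) (s : ℝ) (hs : 1 ≤ s)
    (U : Matrix (Fin 2) (Fin 2) ℝ) (hU : U ∈ Matrix.orthogonalGroup (Fin 2) ℝ)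
    (hUu : Matrix.toEuclideanLin U u = EuclideanSpace.single 0 1) :
    (∀ i j : ℤ,
      ‖scalingMap U s (gridPointZ v₁ v₂ d₁ d₂ (i + 1) j) -
          scalingMap U s (gridPointZ v₁ v₂ d₁ d₂ i j)‖ =
        Real.sqrt ((s ^ 2 - 1) * ⟪u, v₁⟫ ^ 2 + 1) * d₁) ∧
    (∀ i j : ℤ,
      ‖scalingMap U s (gridPointZ v₁ v₂ d₁ d₂ i (j + 1)) -
          scalingMap U s (gridPointZ v₁ v₂ d₁ d₂ i j)‖ =
        Real.sqrt ((s ^ 2 - 1) * (1 - ⟪u, v₁⟫ ^ 2) + 1) * d₂) ∧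
    (∀ i i' j j' : ℤ, j ≠ j' →
      d₂ ≤ ‖scalingMap U s (gridPointZ v₁ v₂ d₁ d₂ i j) -
          scalingMap U s (gridPointZ v₁ v₂ d₁ d₂ i' j')‖) := by
  have hd₂ : 0 < d₂ := hd₁.trans hd₁₂
  have hs2 : 0 ≤ s ^ 2 - 1 := by nlinarith
  have keyn : ∀ x : EuclideanSpace ℝ (Fin 2),
      ‖scalingMap U s x‖ = Real.sqrt (‖x‖ ^ 2 + (s ^ 2 - 1) * ⟪u, x⟫ ^ 2) := by
    intro x
    rw [← scalingMap_norm_sq U hU u hUu s x, Real.sqrt_sq (norm_nonneg _)]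
  have hn : ∀ y : EuclideanSpace ℝ (Fin 2), ‖y‖ ^ 2 = y 0 ^ 2 + y 1 ^ 2 := by
    intro y
    rw [EuclideanSpace.norm_sq_eq]
    simp [Fin.sum_univ_two]
  have hnorm2 : ∀ a b : ℝ, ‖a • v₁ + b • v₂‖ ^ 2 = a ^ 2 + b ^ 2 := by
    intro a b
    have h11 : ⟪v₁, v₁⟫ = (1:ℝ) := by rw [real_inner_self_eq_norm_sq, hv₁]; norm_num
    have h22 : ⟪v₂, v₂⟫ = (1:ℝ) := by rw [real_inner_self_eq_norm_sq, hv₂]; norm_num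
    rw [← real_inner_self_eq_norm_sq]
    simp only [real_inner_add_add_self, real_inner_smul_left, real_inner_smul_right,
      h11, h22, hv₁₂]
    ring
  have hic : ∀ a b : ℝ, ⟪u, a • v₁ + b • v₂⟫ = a * ⟪u, v₁⟫ + b * ⟪u, v₂⟫ := by
    intro a b
    simp only [inner_add_right, real_inner_smul_right]
  -- ⟪u,v₂⟫² = 1 - ⟪u,v₁⟫²
  have huv2 : ⟪u, v₂⟫ ^ 2 = 1 - ⟪u, v₁⟫ ^ 2 := by
    have hp : v₁ 0 ^ 2 + v₁ 1 ^ 2 = 1 := by rw [← hn]; rw [hv₁]; norm_num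
    have hr : v₂ 0 ^ 2 + v₂ 1 ^ 2 = 1 := by rw [← hn]; rw [hv₂]; norm_num
    have ho : v₁ 0 * v₂ 0 + v₁ 1 * v₂ 1 = 0 := by
      have := hv₁₂
      simpa [PiLp.inner_apply, Fin.sum_univ_two, mul_comm] using this
    have huc : u 0 ^ 2 + u 1 ^ 2 = 1 := by rw [← hn]; rw [hu]; norm_num
    obtain ⟨hc1, hc2, hc3⟩ := cols_aux (v₁ 0) (v₁ 1) (v₂ 0) (v₂ 1) hp hr ho
    have hi1 : ⟪u, v₁⟫ = u 0 * v₁ 0 + u 1 * v₁ 1 := by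
      simp [PiLp.inner_apply, Fin.sum_univ_two, mul_comm]
    have hi2 : ⟪u, v₂⟫ = u 0 * v₂ 0 + u 1 * v₂ 1 := by
      simp [PiLp.inner_apply, Fin.sum_univ_two, mul_comm]
    rw [hi1, hi2]
    linear_combination (u 0 ^ 2) * hc1 + (u 1 ^ 2) * hc2 + (2 * u 0 * u 1) * hc3 + huc
  refine ⟨?_, ?_, ?_⟩
  · intro i j
    rw [← map_sub]
    have hdiff : gridPointZ v₁ v₂ d₁ d₂ (i + 1) j - gridPointZ v₁ v₂ d₁ d₂ i j
        = d₁ • v₁ + (0:ℝ) • v₂ := by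
      simp only [gridPointZ]; push_cast; module
    rw [hdiff, keyn, hnorm2, hic]
    rw [show d₁ ^ 2 + 0 ^ 2 + (s ^ 2 - 1) * (d₁ * ⟪u, v₁⟫ + 0 * ⟪u, v₂⟫) ^ 2
        = ((s ^ 2 - 1) * ⟪u, v₁⟫ ^ 2 + 1) * d₁ ^ 2 by ring]
    rw [Real.sqrt_mul (by nlinarith [sq_nonneg ⟪u, v₁⟫]), Real.sqrt_sq hd₁.le]
  · intro i j
    rw [← map_sub]
    have hdiff : gridPointZ v₁ v₂ d₁ d₂ i (j + 1) - gridPointZ v₁ v₂ d₁ d₂ i j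
        = (0:ℝ) • v₁ + d₂ • v₂ := by
      simp only [gridPointZ]; push_cast; module
    rw [hdiff, keyn, hnorm2, hic]
    rw [show (0:ℝ) ^ 2 + d₂ ^ 2 + (s ^ 2 - 1) * (0 * ⟪u, v₁⟫ + d₂ * ⟪u, v₂⟫) ^ 2
        = ((s ^ 2 - 1) * ⟪u, v₂⟫ ^ 2 + 1) * d₂ ^ 2 by ring]
    rw [huv2, Real.sqrt_mul (by nlinarith [sq_nonneg ⟪u, v₂⟫, huv2]), Real.sqrt_sq hd₂.le]
  · intro i i' j j' hjj
    rw [← map_sub]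
    have hdiff : gridPointZ v₁ v₂ d₁ d₂ i j - gridPointZ v₁ v₂ d₁ d₂ i' j'
        = (((i:ℝ) - i') * d₁) • v₁ + (((j:ℝ) - j') * d₂) • v₂ := by
      simp only [gridPointZ]; module
    rw [hdiff, keyn, hnorm2]
    have hj : (1:ℝ) ≤ ((j:ℝ) - j') ^ 2 := by
      have h1 : (1:ℤ) ≤ |j - j'| := Int.one_le_abs (sub_ne_zero.mpr hjj)
      have h2 : (1:ℤ) ≤ (j - j') ^ 2 := by nlinarith [sq_abs (j - j')]
      exact_mod_cast h2
    calc d₂ = Real.sqrt (d₂ ^ 2) := (Real.sqrt_sq hd₂.le).symm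
      _ ≤ _ := by
        apply Real.sqrt_le_sqrt
        nlinarith [sq_nonneg (((i:ℝ) - i') * d₁), sq_nonneg ⟪u, (((i:ℝ) - i') * d₁) • v₁ +
          (((j:ℝ) - j') * d₂) • v₂⟫, mul_nonneg hs2 (sq_nonneg ⟪u, (((i:ℝ) - i') * d₁) • v₁ +
          (((j:ℝ) - j') * d₂) • v₂⟫), sq_nonneg d₂]
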